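/- Let X be a stationary mean-zero process with autocovariance γ(τ) satisfying γ(τ) ~ C τ^{2H-2} as τ → ∞ with 1/2 < H < 1 and C = H(2H-1)γ(0)... (persistent case, γ(0) = 1). Then the DFA-m fluctuation function satisfies E F^2(s)/s^{2H} → λ_{m,H} := 2H(2H-1) Σ_{q=0}^{2m+3} d_q/(q+2H-1) as s → ∞. -/

import Mathlib

open MeasureTheory Finset Filter Matrix

noncomputable def dfaD (s : ℕ) : Matrix (Fin s) (Fin s) ℝ :=
  fun i j => if (j : ℕ) ≤ (i : ℕ) then 1 else 0

noncomputable def dfaB (m s : ℕ) : Matrix (Fin (m+1)) (Fin s) ℝ :=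
  fun k t => (((t : ℕ) + 1 : ℕ) : ℝ) ^ (k : ℕ)

noncomputable def dfaQ (m s : ℕ) : Matrix (Fin s) (Fin s) ℝ :=
  (dfaB m s)ᵀ * (dfaB m s * (dfaB m s)ᵀ)⁻¹ * dfaB m s

noncomputable def dfaA (m s : ℕ) : Matrix (Fin s) (Fin s) ℝ :=
  (dfaD s)ᵀ * (1 - dfaQ m s) * dfaD s

noncomputable def dfaG (m s j : ℕ) : ℝ :=
  ∑ k : Fin s, ∑ l : Fin s, if (l : ℕ) = (k : ℕ) + j then dfaA m s k l else 0

lemma inv_rpow_tendsto (c : ℝ) (hc : 0 < c) :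
    Tendsto (fun s : ℕ => ((s:ℝ)^c)⁻¹) atTop (nhds 0) :=
  ((tendsto_rpow_atTop hc).comp tendsto_natCast_atTop_atTop).inv_tendsto_atTop

lemma ratio_rpow_tendsto (c : ℝ) :
    Tendsto (fun s : ℕ => (((s:ℝ) - 1)/(s:ℝ))^c) atTop (nhds 1) := by
  have h1 : Tendsto (fun s : ℕ => ((s:ℝ) - 1)/(s:ℝ)) atTop (nhds 1) := by
    have := (tendsto_natCast_atTop_atTop (R := ℝ)).inv_tendsto_atTop
    have h2 : Tendsto (fun s : ℕ => 1 - ((s:ℝ))⁻¹) atTop (nhds (1 - 0)) :=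
      tendsto_const_nhds.sub this
    rw [sub_zero] at h2
    refine h2.congr' ?_
    filter_upwards [eventually_ge_atTop 1] with s hs
    have : (s:ℝ) ≠ 0 := by positivity
    field_simp
  have hc : ContinuousAt (fun x : ℝ => x ^ c) 1 :=
    Real.continuousAt_rpow_const 1 c (Or.inl one_ne_zero)
  have := hc.tendsto.comp h1
  rw [Real.one_rpow] at this
  exact this

lemma sum_rpow_asymp (b : ℝ) (hb : -1 < b) :
    Tendsto (fun s : ℕ => (∑ j ∈ Finset.Ico 1 s, (j:ℝ)^b) / (s:ℝ)^(b+1))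
      atTop (nhds (1/(b+1))) := by
  have hb1 : 0 < b + 1 := by linarith
  have hinv := inv_rpow_tendsto (b+1) hb1
  have hrat := ratio_rpow_tendsto (b+1)
  -- limit of the "((s-1)/s)^(b+1)/(b+1)" style bound
  have hlim1 : Tendsto (fun s : ℕ => ((s-1:ℕ):ℝ)^(b+1)/(b+1)/(s:ℝ)^(b+1))
      atTop (nhds (1/(b+1))) := by
    refine (hrat.div_const (b+1)).congr' ?_
    filter_upwards [eventually_ge_atTop 1] with s hs
    have hs1 : (1:ℝ) ≤ (s:ℝ) := by exact_mod_cast hs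
    have hs0 : (0:ℝ) < (s:ℝ) := by linarith
    rw [Nat.cast_sub hs, Nat.cast_one, Real.div_rpow (by linarith) hs0.le]
    ring
  have hlim2 : Tendsto (fun s : ℕ => ((s:ℝ)^(b+1) - 1)/(b+1)/(s:ℝ)^(b+1))
      atTop (nhds (1/(b+1))) := by
    have h := (tendsto_const_nhds (α := ℕ) (x := (1:ℝ))).sub hinv
    rw [sub_zero] at h
    refine (h.div_const (b+1)).congr' ?_
    filter_upwards [eventually_ge_atTop 1] with s hs
    have hs1 : (1:ℝ) ≤ (s:ℝ) := by exact_mod_cast hs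
    have hsp : (0:ℝ) < (s:ℝ)^(b+1) := Real.rpow_pos_of_pos (by linarith) _
    rw [div_div, mul_comm (b+1), ← div_div]
    congr 1
    rw [sub_div, div_self hsp.ne', one_div]
  rcases le_or_gt 0 b with hb0 | hb0
  · -- monotone case
    refine tendsto_of_tendsto_of_tendsto_of_le_of_le' hlim1 hlim2 ?_ ?_
    · filter_upwards [eventually_ge_atTop 1] with s hs
      have hsp : (0:ℝ) < (s:ℝ)^(b+1) := Real.rpow_pos_of_pos (by positivity) _
      have hmono : MonotoneOn (fun x:ℝ => x^b) (Set.Icc (((0:ℕ)):ℝ) ((s-1:ℕ):ℝ)) := by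
        intro x hx y hy hxy
        exact Real.rpow_le_rpow (by simpa using hx.1) hxy hb0
      have h := hmono.integral_le_sum_Ico (Nat.zero_le (s-1))
      have hint : (∫ x in ((0:ℕ):ℝ)..((s-1:ℕ):ℝ), x ^ b)
          = ((s-1:ℕ):ℝ)^(b+1)/(b+1) := by
        rw [integral_rpow (Or.inl hb)]
        simp [Real.zero_rpow hb1.ne']
      have hre : ∑ i ∈ Finset.Ico 0 (s-1), (((i+1:ℕ)):ℝ)^b
          = ∑ j ∈ Finset.Ico 1 s, (j:ℝ)^b := by
        rw [Finset.sum_Ico_eq_sum_range, Finset.sum_Ico_eq_sum_range]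
        have : s - 1 - 0 = s - 1 := by omega
        rw [this]
        refine Finset.sum_congr rfl fun i _ => ?_
        congr 2
        omega
      rw [hint, hre] at h
      exact div_le_div_of_nonneg_right h hsp.le
    · filter_upwards [eventually_ge_atTop 1] with s hs
      have hsp : (0:ℝ) < (s:ℝ)^(b+1) := Real.rpow_pos_of_pos (by positivity) _
      have hmono : MonotoneOn (fun x:ℝ => x^b) (Set.Icc (((1:ℕ)):ℝ) ((s:ℕ):ℝ)) := by
        intro x hx y hy hxy
        refine Real.rpow_le_rpow (le_trans (by norm_num) hx.1) hxy hb0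
      have h := hmono.sum_le_integral_Ico hs
      have hint : (∫ x in ((1:ℕ):ℝ)..((s:ℕ):ℝ), x ^ b)
          = ((s:ℝ)^(b+1) - 1)/(b+1) := by
        rw [integral_rpow (Or.inl hb)]
        simp
      rw [hint] at h
      exact div_le_div_of_nonneg_right h hsp.le
  · -- antitone case
    have hanti : ∀ (c : ℕ), AntitoneOn (fun x:ℝ => x^b) (Set.Icc (((1:ℕ)):ℝ) ((c:ℕ):ℝ)) := by
      intro c x hx y hy hxy
      refine Real.rpow_le_rpow_of_nonpos (lt_of_lt_of_le (by norm_num) hx.1) hxy hb0.le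
    have hlim3 : Tendsto
        (fun s : ℕ => (1 + (((s-1:ℕ):ℝ)^(b+1) - 1)/(b+1))/(s:ℝ)^(b+1))
        atTop (nhds (1/(b+1))) := by
      have h := hinv.add ((hrat.sub hinv).div_const (b+1))
      rw [zero_add, sub_zero] at h
      refine h.congr' ?_
      filter_upwards [eventually_ge_atTop 1] with s hs
      have hs1 : (1:ℝ) ≤ (s:ℝ) := by exact_mod_cast hs
      have hsp : (0:ℝ) < (s:ℝ)^(b+1) := Real.rpow_pos_of_pos (by linarith) _
      rw [Nat.cast_sub hs, Nat.cast_one, Real.div_rpow (by linarith) (by linarith)]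
      rw [eq_div_iff hsp.ne']
      field_simp
    refine tendsto_of_tendsto_of_tendsto_of_le_of_le' hlim2 hlim3 ?_ ?_
    · filter_upwards [eventually_ge_atTop 1] with s hs
      have hsp : (0:ℝ) < (s:ℝ)^(b+1) := Real.rpow_pos_of_pos (by positivity) _
      have h := (hanti s).integral_le_sum_Ico hs
      have hint : (∫ x in ((1:ℕ):ℝ)..((s:ℕ):ℝ), x ^ b)
          = ((s:ℝ)^(b+1) - 1)/(b+1) := by
        rw [integral_rpow (Or.inl hb)]
        simp
      rw [hint] at h
      exact div_le_div_of_nonneg_right h hsp.le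
    · filter_upwards [eventually_ge_atTop 2] with s hs
      have hsp : (0:ℝ) < (s:ℝ)^(b+1) := Real.rpow_pos_of_pos (by positivity) _
      have hsplit : ∑ j ∈ Finset.Ico 1 s, (j:ℝ)^b
          = ((1:ℕ):ℝ)^b + ∑ j ∈ Finset.Ico 2 s, (j:ℝ)^b :=
        Finset.sum_eq_sum_Ico_succ_bot (by omega) _
      have hre : ∑ j ∈ Finset.Ico 2 s, (j:ℝ)^b
          = ∑ i ∈ Finset.Ico 1 (s-1), (((i+1:ℕ)):ℝ)^b := by
        rw [Finset.sum_Ico_eq_sum_range, Finset.sum_Ico_eq_sum_range]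
        have : s - 1 - 1 = s - 2 := by omega
        rw [this]
        refine Finset.sum_congr rfl fun i _ => ?_
        congr 2
        omega
      have h := (hanti (s-1)).sum_le_integral_Ico (by omega : 1 ≤ s - 1)
      have hint : (∫ x in ((1:ℕ):ℝ)..((s-1:ℕ):ℝ), x ^ b)
          = (((s-1:ℕ):ℝ)^(b+1) - 1)/(b+1) := by
        rw [integral_rpow (Or.inl hb)]
        simp
      rw [hint] at h
      have : ∑ j ∈ Finset.Ico 1 s, (j:ℝ)^b
          ≤ 1 + (((s-1:ℕ):ℝ)^(b+1) - 1)/(b+1) := by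
        rw [hsplit, hre]
        have h1 : (((1:ℕ)):ℝ)^b = 1 := by norm_num
        rw [h1]
        linarith
      exact div_le_div_of_nonneg_right this hsp.le

lemma abs_le_eps_tendsto_zero (f : ℕ → ℝ)
    (h : ∀ ε > (0:ℝ), ∀ᶠ s in atTop, |f s| ≤ ε) : Tendsto f atTop (nhds 0) := by
  rw [NormedAddCommGroup.tendsto_nhds_zero]
  intro ε hε
  filter_upwards [h (ε/2) (by linarith)] with s hs
  rw [Real.norm_eq_abs]
  linarith

lemma key_sum_tendsto (b : ℝ) (hb : -1 < b) (g : ℕ → ℝ) (c : ℝ)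
    (hg : Tendsto (fun j : ℕ => g j / (j:ℝ)^b) atTop (nhds c)) :
    Tendsto (fun s : ℕ => (∑ j ∈ Finset.Ico 1 s, g j) / (s:ℝ)^(b+1))
      atTop (nhds (c/(b+1))) := by
  have hb1 : 0 < b + 1 := by linarith
  have hA := sum_rpow_asymp b hb
  have hKbd : ∀ᶠ s : ℕ in atTop,
      (∑ j ∈ Finset.Ico 1 s, (j:ℝ)^b) / (s:ℝ)^(b+1) ≤ 1/(b+1) + 1 :=
    (hA.eventually_lt_const (by linarith)).mono fun s hs => hs.le
  have hdiff : Tendsto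
      (fun s : ℕ => (∑ j ∈ Finset.Ico 1 s, (g j - c * (j:ℝ)^b)) / (s:ℝ)^(b+1))
      atTop (nhds 0) := by
    apply abs_le_eps_tendsto_zero
    intro ε hε
    set K : ℝ := 1/(b+1) + 1 with hK
    have hKpos : 0 < K := by positivity
    set ε' : ℝ := ε / (2*K) with hε'def
    have hε'pos : 0 < ε' := by positivity
    obtain ⟨N, hN⟩ := Metric.tendsto_atTop.mp hg ε' hε'pos
    set J := max N 1 with hJdef
    set C : ℝ := ∑ j ∈ Finset.Ico 1 J, |g j - c * (j:ℝ)^b| with hCdef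
    have hC0 : ∀ᶠ s : ℕ in atTop, C * ((s:ℝ)^(b+1))⁻¹ < ε/2 := by
      have h0 := (inv_rpow_tendsto (b+1) hb1).const_mul C
      rw [mul_zero] at h0
      exact h0.eventually_lt_const (by linarith)
    filter_upwards [eventually_ge_atTop J, eventually_ge_atTop 1, hKbd, hC0]
      with s hsJ hs1 hKs hCs
    have hsp : (0:ℝ) < (s:ℝ)^(b+1) := Real.rpow_pos_of_pos (by positivity) _
    have hsplit : ∑ j ∈ Finset.Ico 1 J, (g j - c * (j:ℝ)^b)
        + ∑ j ∈ Finset.Ico J s, (g j - c * (j:ℝ)^b)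
        = ∑ j ∈ Finset.Ico 1 s, (g j - c * (j:ℝ)^b) :=
      Finset.sum_Ico_consecutive _ (le_max_right N 1) hsJ
    have htail : |∑ j ∈ Finset.Ico J s, (g j - c * (j:ℝ)^b)|
        ≤ ε' * ∑ j ∈ Finset.Ico 1 s, (j:ℝ)^b := by
      calc |∑ j ∈ Finset.Ico J s, (g j - c * (j:ℝ)^b)|
          ≤ ∑ j ∈ Finset.Ico J s, |g j - c * (j:ℝ)^b| :=
            Finset.abs_sum_le_sum_abs _ _
        _ ≤ ∑ j ∈ Finset.Ico J s, ε' * (j:ℝ)^b := by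
            refine Finset.sum_le_sum fun j hj => ?_
            have hjm := Finset.mem_Ico.mp hj
            have hj1 : 1 ≤ j := le_trans (le_max_right N 1) hjm.1
            have hjN : N ≤ j := le_trans (le_max_left N 1) hjm.1
            have hjp : (0:ℝ) < (j:ℝ)^b := Real.rpow_pos_of_pos (by positivity) _
            have hd := hN j hjN
            rw [Real.dist_eq] at hd
            have : g j - c * (j:ℝ)^b = (g j / (j:ℝ)^b - c) * (j:ℝ)^b := by
              field_simp
            rw [this, abs_mul, abs_of_pos hjp]
            exact mul_le_mul_of_nonneg_right hd.le hjp.le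
        _ ≤ ε' * ∑ j ∈ Finset.Ico 1 s, (j:ℝ)^b := by
            rw [← Finset.mul_sum]
            refine mul_le_mul_of_nonneg_left ?_ hε'pos.le
            refine Finset.sum_le_sum_of_subset_of_nonneg
              (Finset.Ico_subset_Ico (le_max_right N 1) le_rfl) fun j hj _ => ?_
            positivity
    have hhead : |∑ j ∈ Finset.Ico 1 J, (g j - c * (j:ℝ)^b)| ≤ C :=
      Finset.abs_sum_le_sum_abs _ _
    have habs : |∑ j ∈ Finset.Ico 1 s, (g j - c * (j:ℝ)^b)|
        ≤ C + ε' * ∑ j ∈ Finset.Ico 1 s, (j:ℝ)^b := by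
      rw [← hsplit]
      calc |_ + _| ≤ _ + _ := abs_add_le _ _
        _ ≤ C + ε' * ∑ j ∈ Finset.Ico 1 s, (j:ℝ)^b := add_le_add hhead htail
    rw [abs_div, abs_of_pos hsp]
    rw [div_le_iff₀ hsp]
    have h2 : ε' * ∑ j ∈ Finset.Ico 1 s, (j:ℝ)^b ≤ ε' * (K * (s:ℝ)^(b+1)) :=
      mul_le_mul_of_nonneg_left ((div_le_iff₀ hsp).mp hKs) hε'pos.le
    have h3 : C ≤ ε/2 * (s:ℝ)^(b+1) := by
      rw [← div_eq_mul_inv] at hCs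
      exact (div_le_iff₀ hsp).mp hCs.le
    have h4 : ε' * (K * (s:ℝ)^(b+1)) = ε/2 * (s:ℝ)^(b+1) := by
      rw [hε'def]
      field_simp
    calc |∑ j ∈ Finset.Ico 1 s, (g j - c * (j:ℝ)^b)|
        ≤ C + ε' * ∑ j ∈ Finset.Ico 1 s, (j:ℝ)^b := habs
      _ ≤ ε/2 * (s:ℝ)^(b+1) + ε/2 * (s:ℝ)^(b+1) :=
          add_le_add h3 (h2.trans_eq h4)
      _ = ε * (s:ℝ)^(b+1) := by ring
  have hfinal := hdiff.add (hA.const_mul c)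
  rw [zero_add] at hfinal
  have : c * (1/(b+1)) = c/(b+1) := by ring
  rw [this] at hfinal
  refine hfinal.congr ?_
  intro s
  rw [Finset.sum_sub_distrib, ← Finset.mul_sum]
  ring

lemma dfaA_symm (m s : ℕ) (k l : Fin s) : dfaA m s k l = dfaA m s l k := by
  have hQ : (dfaQ m s)ᵀ = dfaQ m s := by
    unfold dfaQ
    rw [Matrix.transpose_mul, Matrix.transpose_mul, Matrix.transpose_transpose,
        Matrix.transpose_nonsing_inv, Matrix.transpose_mul, Matrix.transpose_transpose,
        Matrix.mul_assoc]
  have hA : (dfaA m s)ᵀ = dfaA m s := by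
    unfold dfaA
    rw [Matrix.transpose_mul, Matrix.transpose_mul, Matrix.transpose_transpose,
        Matrix.transpose_sub, Matrix.transpose_one, hQ, Matrix.mul_assoc]
  rw [← Matrix.transpose_apply (dfaA m s) l k, hA]

lemma gamma_G_sum (m s : ℕ) (c : ℕ → ℝ) (lo : ℕ) :
    ∑ j ∈ Finset.Ico lo s, c j * dfaG m s j
    = ∑ k : Fin s, ∑ l : Fin s,
        if (k:ℕ) + lo ≤ (l:ℕ) then dfaA m s k l * c ((l:ℕ) - (k:ℕ)) else 0 := by
  unfold dfaG
  simp_rw [Finset.mul_sum]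
  rw [Finset.sum_comm]
  refine Finset.sum_congr rfl fun k _ => ?_
  rw [Finset.sum_comm]
  refine Finset.sum_congr rfl fun l _ => ?_
  by_cases h : (k:ℕ) + lo ≤ (l:ℕ)
  · rw [if_pos h]
    have hmem : (l:ℕ) - (k:ℕ) ∈ Finset.Ico lo s := by
      refine Finset.mem_Ico.mpr ⟨by omega, ?_⟩
      have := l.isLt
      omega
    have h1 : ∑ j ∈ Finset.Ico lo s,
        c j * (if (l:ℕ) = (k:ℕ) + j then dfaA m s k l else 0)
        = c ((l:ℕ)-(k:ℕ)) * dfaA m s k l := by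
      rw [Finset.sum_eq_single_of_mem ((l:ℕ)-(k:ℕ)) hmem]
      · rw [if_pos (by omega)]
      · intro j hj hne
        rw [if_neg (by omega), mul_zero]
    rw [h1]
    ring
  · rw [if_neg h]
    refine Finset.sum_eq_zero fun j hj => ?_
    have hjm := Finset.mem_Ico.mp hj
    rw [if_neg (by omega), mul_zero]

lemma sum_A_split (m s : ℕ) (γ : ℕ → ℝ) :
    (∑ k : Fin s, ∑ l : Fin s,
        dfaA m s k l * γ (if (k:ℕ) ≤ (l:ℕ) then (l:ℕ) - (k:ℕ) else (k:ℕ) - (l:ℕ)))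
    = γ 0 * dfaG m s 0 + 2 * ∑ j ∈ Finset.Ico 1 s, γ j * dfaG m s j := by
  rcases Nat.eq_zero_or_pos s with hs | hs
  · subst hs
    simp [dfaG]
  have hU := gamma_G_sum m s γ 0
  have hV := gamma_G_sum m s γ 1
  -- lower triangular part transformed
  have hW : (∑ k : Fin s, ∑ l : Fin s,
        if (l:ℕ) < (k:ℕ) then dfaA m s k l * γ ((k:ℕ)-(l:ℕ)) else 0)
      = ∑ k : Fin s, ∑ l : Fin s,
        if (k:ℕ) + 1 ≤ (l:ℕ) then dfaA m s k l * γ ((l:ℕ)-(k:ℕ)) else 0 := by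
    rw [Finset.sum_comm]
    refine Finset.sum_congr rfl fun k _ => Finset.sum_congr rfl fun l _ => ?_
    by_cases h : (k:ℕ) + 1 ≤ (l:ℕ)
    · rw [if_pos (by omega), if_pos h, dfaA_symm]
    · rw [if_neg (by omega), if_neg h]
  have hLW : (∑ k : Fin s, ∑ l : Fin s,
        dfaA m s k l * γ (if (k:ℕ) ≤ (l:ℕ) then (l:ℕ) - (k:ℕ) else (k:ℕ) - (l:ℕ)))
      = (∑ k : Fin s, ∑ l : Fin s,
          if (k:ℕ) + 0 ≤ (l:ℕ) then dfaA m s k l * γ ((l:ℕ)-(k:ℕ)) else 0)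
        + ∑ k : Fin s, ∑ l : Fin s,
          if (l:ℕ) < (k:ℕ) then dfaA m s k l * γ ((k:ℕ)-(l:ℕ)) else 0 := by
    rw [← Finset.sum_add_distrib]
    refine Finset.sum_congr rfl fun k _ => ?_
    rw [← Finset.sum_add_distrib]
    refine Finset.sum_congr rfl fun l _ => ?_
    by_cases h : (k:ℕ) ≤ (l:ℕ)
    · rw [if_pos h, if_pos (by omega), if_neg (by omega), add_zero]
    · rw [if_neg h, if_neg (by omega), if_pos (by omega), zero_add]
  rw [hLW, hW, ← hU, ← hV]
  have hsplit : ∑ j ∈ Finset.Ico 0 s, γ j * dfaG m s j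
      = γ 0 * dfaG m s 0 + ∑ j ∈ Finset.Ico 1 s, γ j * dfaG m s j :=
    Finset.sum_eq_sum_Ico_succ_bot hs _
  rw [hsplit]
  ring

lemma integral_step {Ω : Type*} [MeasurableSpace Ω] (μ : Measure Ω)
    (m s : ℕ) (X : ℕ → Ω → ℝ) (γ : ℕ → ℝ)
    (hint : ∀ t u, Integrable (fun ω => X t ω * X u ω) μ)
    (hcov : ∀ t τ, ∫ ω, X t ω * X (t + τ) ω ∂μ = γ τ) :
    (∫ ω, (1/(s:ℝ)) * ∑ k : Fin s, ∑ j : Fin s,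
        dfaA m s k j * X (1 + (k:ℕ)) ω * X (1 + (j:ℕ)) ω ∂μ)
    = (1/(s:ℝ)) * ∑ k : Fin s, ∑ l : Fin s,
        dfaA m s k l * γ (if (k:ℕ) ≤ (l:ℕ) then (l:ℕ)-(k:ℕ) else (k:ℕ)-(l:ℕ)) := by
  simp only [mul_assoc]
  rw [MeasureTheory.integral_const_mul]
  congr 1
  refine (MeasureTheory.integral_finset_sum _ (fun k _ =>
    integrable_finset_sum _ (fun l _ => (hint _ _).const_mul _))).trans ?_
  refine Finset.sum_congr rfl fun k _ => ?_
  refine (MeasureTheory.integral_finset_sum _ (fun l _ => (hint _ _).const_mul _)).trans ?_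
  refine Finset.sum_congr rfl fun l _ => ?_
  rw [MeasureTheory.integral_const_mul]
  congr 1
  by_cases h : (k:ℕ) ≤ (l:ℕ)
  · rw [if_pos h, ← hcov (1+(k:ℕ)) ((l:ℕ)-(k:ℕ))]
    have he : 1+(k:ℕ)+((l:ℕ)-(k:ℕ)) = 1+(l:ℕ) := by omega
    rw [he]
  · rw [if_neg h, ← hcov (1+(l:ℕ)) ((k:ℕ)-(l:ℕ))]
    have he : 1+(l:ℕ)+((k:ℕ)-(l:ℕ)) = 1+(k:ℕ) := by omega
    rw [he]
    have : (fun ω => X (1+(k:ℕ)) ω * X (1+(l:ℕ)) ω)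
        = fun ω => X (1+(l:ℕ)) ω * X (1+(k:ℕ)) ω := by
      funext ω; ring
    rw [this]

theorem dfa_scaling_persistent {Ω : Type*} [MeasurableSpace Ω] (μ : Measure Ω)
    [IsProbabilityMeasure μ] (m : ℕ) (X : ℕ → Ω → ℝ) (H : ℝ) (γ : ℕ → ℝ)
    (hH1 : 1/2 < H) (hH2 : H < 1)
    (hmean : ∀ t, ∫ ω, X t ω ∂μ = 0)
    (hint : ∀ t u, Integrable (fun ω => X t ω * X u ω) μ)
    (hcov : ∀ t τ, ∫ ω, X t ω * X (t + τ) ω ∂μ = γ τ)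
    (hγ0 : γ 0 = 1)
    (hγasym : Tendsto (fun τ : ℕ => γ τ / (H * (2*H - 1) * (τ:ℝ) ^ (2*H - 2)))
      atTop (nhds 1))
    (d : ℕ → ℝ)
    (hG0 : Tendsto (fun s : ℕ => dfaG m s 0 / (d 0 * (s:ℝ)^2)) atTop (nhds 1))
    (hG : ∀ ε > (0:ℝ), ∃ N, ∀ s ≥ N, ∀ j, 1 ≤ j → j ≤ s - 1 →
      |dfaG m s j - ∑ q ∈ Finset.range (2*m + 4),
          d q * (s:ℝ) ^ ((2:ℝ) - q) * (j:ℝ) ^ (q:ℝ)| ≤ ε * (s:ℝ)^2) :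
    Tendsto (fun s : ℕ =>
        (∫ ω, (1/(s:ℝ)) * ∑ k : Fin s, ∑ j : Fin s,
            dfaA m s k j * X (1 + (k:ℕ)) ω * X (1 + (j:ℕ)) ω ∂μ) / (s:ℝ) ^ (2*H))
      atTop
      (nhds (2 * H * (2*H - 1) * ∑ q ∈ Finset.range (2*m + 4),
        d q / ((q:ℝ) + 2*H - 1))) := by

  have h2H1 : (0:ℝ) < 2*H - 1 := by linarith
  have hcpos : (0:ℝ) < H * (2*H - 1) := mul_pos (by linarith) h2H1
  -- γ over pure power tends to H(2H-1)
  have hγc : Tendsto (fun j : ℕ => γ j / (j:ℝ)^(2*H-2)) atTop (nhds (H*(2*H-1))) := by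
    have h := hγasym.const_mul (H*(2*H-1))
    rw [mul_one] at h
    refine h.congr fun j => ?_
    rw [← mul_div_assoc, mul_div_mul_left _ _ hcpos.ne']
  -- limits of the weighted sums, per q
  have hq : ∀ q : ℕ, Tendsto (fun s : ℕ =>
      (∑ j ∈ Finset.Ico 1 s, γ j * (j:ℝ)^(q:ℝ)) / (s:ℝ)^((q:ℝ) + 2*H - 1))
      atTop (nhds ((H*(2*H-1)) / ((q:ℝ) + 2*H - 1))) := by
    intro q
    have hq0 : (0:ℝ) ≤ (q:ℝ) := Nat.cast_nonneg q
    have hb : -1 < (q:ℝ) + 2*H - 2 := by linarith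
    have hg : Tendsto (fun j : ℕ =>
        (γ j * (j:ℝ)^(q:ℝ)) / (j:ℝ)^((q:ℝ)+2*H-2)) atTop (nhds (H*(2*H-1))) := by
      refine hγc.congr' ?_
      filter_upwards [eventually_ge_atTop 1] with j hj
      have hj0 : (0:ℝ) < (j:ℝ) := by exact_mod_cast hj
      have hjq : (0:ℝ) < (j:ℝ)^(q:ℝ) := Real.rpow_pos_of_pos hj0 _
      have h3 : (j:ℝ)^((q:ℝ)+2*H-2) = (j:ℝ)^(q:ℝ) * (j:ℝ)^(2*H-2) := by
        rw [← Real.rpow_add hj0]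
        congr 1
        ring
      rw [h3, mul_comm ((j:ℝ)^(q:ℝ)) ((j:ℝ)^(2*H-2)), mul_div_mul_right _ _ hjq.ne']
    have h := key_sum_tendsto ((q:ℝ)+2*H-2) hb _ (H*(2*H-1)) hg
    simp only [show (q:ℝ)+2*H-2+1 = (q:ℝ)+2*H-1 from by ring] at h
    exact h
  -- bound on partial sums of |γ|
  have habs : Tendsto (fun s : ℕ => (∑ j ∈ Finset.Ico 1 s, |γ j|) / (s:ℝ)^(2*H-1))
      atTop (nhds ((H*(2*H-1))/(2*H-1))) := by
    have hb : -1 < 2*H-2 := by linarith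
    have hg : Tendsto (fun j : ℕ => |γ j| / (j:ℝ)^(2*H-2)) atTop (nhds (H*(2*H-1))) := by
      have h := hγc.abs
      rw [abs_of_pos hcpos] at h
      refine h.congr' ?_
      filter_upwards [eventually_ge_atTop 1] with j hj
      have hj0 : (0:ℝ) < (j:ℝ) := by exact_mod_cast hj
      have hjp : (0:ℝ) < (j:ℝ)^(2*H-2) := Real.rpow_pos_of_pos hj0 _
      rw [abs_div, abs_of_pos hjp]
    have h := key_sum_tendsto (2*H-2) hb _ (H*(2*H-1)) hg
    simp only [show 2*H-2+1 = 2*H-1 from by ring] at h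
    exact h
  set K2 : ℝ := (H*(2*H-1))/(2*H-1) + 1 with hK2def
  have hK2pos : 0 < K2 := by
    have : 0 < (H*(2*H-1))/(2*H-1) := div_pos hcpos h2H1
    rw [hK2def]
    linarith
  have hK2ev : ∀ᶠ s : ℕ in atTop,
      ∑ j ∈ Finset.Ico 1 s, |γ j| ≤ K2 * (s:ℝ)^(2*H-1) := by
    filter_upwards [habs.eventually_lt_const
        (show H*(2*H-1)/(2*H-1) < K2 from by rw [hK2def]; exact lt_add_one _),
      eventually_ge_atTop 1] with s h1 h2
    have hs0 : (0:ℝ) < (s:ℝ) := by exact_mod_cast h2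
    have hsp : (0:ℝ) < (s:ℝ)^(2*H-1) := Real.rpow_pos_of_pos hs0 _
    exact (div_le_iff₀ hsp).mp h1.le
  -- d 0 ≠ 0
  have hd0 : d 0 ≠ 0 := by
    intro h0
    simp only [h0, zero_mul, div_zero] at hG0
    have := tendsto_nhds_unique hG0 tendsto_const_nhds
    norm_num at this
  -- first term tends to zero
  have hg1 : Tendsto (fun s : ℕ => γ 0 * dfaG m s 0 / (s:ℝ)^(1+2*H))
      atTop (nhds 0) := by
    have hpow : Tendsto (fun s : ℕ => (s:ℝ)^(1-2*H)) atTop (nhds 0) := by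
      have h1 := (tendsto_rpow_neg_atTop (by linarith : (0:ℝ) < 2*H-1)).comp
        (tendsto_natCast_atTop_atTop (R := ℝ))
      refine h1.congr fun s => ?_
      simp only [Function.comp]
      congr 1
      ring
    have h := (hG0.mul hpow).const_mul (d 0)
    rw [mul_zero, mul_zero] at h
    refine h.congr' ?_
    filter_upwards [eventually_ge_atTop 1] with s hs
    have hs0 : (0:ℝ) < (s:ℝ) := by exact_mod_cast hs
    have hsD : (0:ℝ) < (s:ℝ)^(1+2*H) := Real.rpow_pos_of_pos hs0 _
    have hstep : d 0 * (dfaG m s 0 / (d 0 * (s:ℝ)^2) * (s:ℝ)^(1-2*H))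
        = dfaG m s 0 * ((s:ℝ)^(1-2*H) / (s:ℝ)^(2:ℕ)) := by
      have hp2 : ((s:ℝ))^(2:ℕ) ≠ 0 := by positivity
      field_simp
    have h2 : (s:ℝ)^(1-2*H) / (s:ℝ)^(2:ℕ) = ((s:ℝ)^(1+2*H))⁻¹ := by
      rw [← Real.rpow_natCast (s:ℝ) 2, ← Real.rpow_sub hs0,
        show (1-2*H) - ((2:ℕ):ℝ) = -(1+2*H) from by push_cast; ring,
        Real.rpow_neg hs0.le]
    rw [hstep, h2, hγ0, one_mul, div_eq_mul_inv]
  -- error term tends to zero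
  have hW : Tendsto (fun s : ℕ => 2 * (∑ j ∈ Finset.Ico 1 s,
      γ j * (dfaG m s j - ∑ q ∈ Finset.range (2*m+4),
        d q * (s:ℝ)^((2:ℝ)-(q:ℝ)) * (j:ℝ)^(q:ℝ))) / (s:ℝ)^(1+2*H))
      atTop (nhds 0) := by
    apply abs_le_eps_tendsto_zero
    intro ε hε
    obtain ⟨N, hN⟩ := hG (ε/(4*K2)) (div_pos hε (by linarith))
    filter_upwards [hK2ev, eventually_ge_atTop N, eventually_ge_atTop 1]
      with s hKs hsN hs1
    have hs0 : (0:ℝ) < (s:ℝ) := by exact_mod_cast hs1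
    have hsp : (0:ℝ) < (s:ℝ)^(1+2*H) := Real.rpow_pos_of_pos hs0 _
    have hsum : |∑ j ∈ Finset.Ico 1 s,
        γ j * (dfaG m s j - ∑ q ∈ Finset.range (2*m+4),
          d q * (s:ℝ)^((2:ℝ)-(q:ℝ)) * (j:ℝ)^(q:ℝ))|
        ≤ (ε/(4*K2) * (s:ℝ)^2) * (K2 * (s:ℝ)^(2*H-1)) := by
      have hc2 : (0:ℝ) ≤ ε/(4*K2) * (s:ℝ)^2 := by positivity
      calc |∑ j ∈ Finset.Ico 1 s, γ j * (dfaG m s j - ∑ q ∈ Finset.range (2*m+4),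
              d q * (s:ℝ)^((2:ℝ)-(q:ℝ)) * (j:ℝ)^(q:ℝ))|
          ≤ ∑ j ∈ Finset.Ico 1 s, |γ j * (dfaG m s j - ∑ q ∈ Finset.range (2*m+4),
              d q * (s:ℝ)^((2:ℝ)-(q:ℝ)) * (j:ℝ)^(q:ℝ))| :=
            Finset.abs_sum_le_sum_abs _ _
        _ ≤ ∑ j ∈ Finset.Ico 1 s, |γ j| * (ε/(4*K2) * (s:ℝ)^2) := by
            refine Finset.sum_le_sum fun j hj => ?_
            have hjm := Finset.mem_Ico.mp hj
            have hb := hN s hsN j hjm.1 (by omega)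
            rw [abs_mul]
            exact mul_le_mul_of_nonneg_left hb (abs_nonneg _)
        _ = (ε/(4*K2) * (s:ℝ)^2) * ∑ j ∈ Finset.Ico 1 s, |γ j| := by
            rw [← Finset.sum_mul]
            ring
        _ ≤ (ε/(4*K2) * (s:ℝ)^2) * (K2 * (s:ℝ)^(2*H-1)) :=
            mul_le_mul_of_nonneg_left hKs hc2
    rw [abs_div, abs_of_pos hsp, div_le_iff₀ hsp]
    have hssum : (s:ℝ)^2 * (s:ℝ)^(2*H-1) = (s:ℝ)^(1+2*H) := by
      rw [← Real.rpow_natCast (s:ℝ) 2, ← Real.rpow_add hs0]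
      congr 1
      push_cast
      ring
    have heq : 2 * ((ε/(4*K2) * (s:ℝ)^2) * (K2 * (s:ℝ)^(2*H-1)))
        = ε/2 * (s:ℝ)^(1+2*H) := by
      rw [← hssum]
      field_simp
      ring
    calc |2 * (∑ j ∈ Finset.Ico 1 s,
          γ j * (dfaG m s j - ∑ q ∈ Finset.range (2*m+4),
            d q * (s:ℝ)^((2:ℝ)-(q:ℝ)) * (j:ℝ)^(q:ℝ)))|
        = 2 * |∑ j ∈ Finset.Ico 1 s,
          γ j * (dfaG m s j - ∑ q ∈ Finset.range (2*m+4),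
            d q * (s:ℝ)^((2:ℝ)-(q:ℝ)) * (j:ℝ)^(q:ℝ))| := by
          rw [abs_mul]
          norm_num
      _ ≤ 2 * ((ε/(4*K2) * (s:ℝ)^2) * (K2 * (s:ℝ)^(2*H-1))) := by linarith
      _ = ε/2 * (s:ℝ)^(1+2*H) := heq
      _ ≤ ε * (s:ℝ)^(1+2*H) := by nlinarith
  -- main term
  have hM : Tendsto (fun s : ℕ => ∑ q ∈ Finset.range (2*m+4),
      2 * d q * ((∑ j ∈ Finset.Ico 1 s, γ j * (j:ℝ)^(q:ℝ)) / (s:ℝ)^((q:ℝ)+2*H-1)))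
      atTop (nhds (∑ q ∈ Finset.range (2*m+4),
        2 * d q * ((H*(2*H-1)) / ((q:ℝ)+2*H-1)))) :=
    tendsto_finset_sum _ fun q _ => (hq q).const_mul (2 * d q)
  -- combine
  have hfull := hg1.add (hW.add hM)
  rw [zero_add, zero_add] at hfull
  have hval : (∑ q ∈ Finset.range (2*m+4),
      2 * d q * ((H*(2*H-1)) / ((q:ℝ)+2*H-1)))
      = 2 * H * (2*H - 1) * ∑ q ∈ Finset.range (2*m + 4),
        d q / ((q:ℝ) + 2*H - 1) := by
    rw [Finset.mul_sum]
    refine Finset.sum_congr rfl fun q _ => ?_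
    ring
  rw [hval] at hfull
  refine hfull.congr' ?_
  filter_upwards [eventually_ge_atTop 1] with s hs
  have hs0 : (0:ℝ) < (s:ℝ) := by exact_mod_cast hs
  have hsD : (0:ℝ) < (s:ℝ)^(1+2*H) := Real.rpow_pos_of_pos hs0 _
  have hs2H : (0:ℝ) < (s:ℝ)^(2*H) := Real.rpow_pos_of_pos hs0 _
  rw [integral_step μ m s X γ hint hcov, sum_A_split m s γ]
  -- identify the main term sum
  have eM : (∑ q ∈ Finset.range (2*m+4),
      2 * d q * ((∑ j ∈ Finset.Ico 1 s, γ j * (j:ℝ)^(q:ℝ)) / (s:ℝ)^((q:ℝ)+2*H-1)))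
      = 2 * (∑ j ∈ Finset.Ico 1 s, γ j * ∑ q ∈ Finset.range (2*m+4),
          d q * (s:ℝ)^((2:ℝ)-(q:ℝ)) * (j:ℝ)^(q:ℝ)) / (s:ℝ)^(1+2*H) := by
    have hswap : (∑ j ∈ Finset.Ico 1 s, γ j * ∑ q ∈ Finset.range (2*m+4),
        d q * (s:ℝ)^((2:ℝ)-(q:ℝ)) * (j:ℝ)^(q:ℝ))
        = ∑ q ∈ Finset.range (2*m+4), (d q * (s:ℝ)^((2:ℝ)-(q:ℝ)))
            * ∑ j ∈ Finset.Ico 1 s, γ j * (j:ℝ)^(q:ℝ) := by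
      simp_rw [Finset.mul_sum]
      rw [Finset.sum_comm]
      refine Finset.sum_congr rfl fun q _ => Finset.sum_congr rfl fun j _ => by ring
    rw [hswap, Finset.mul_sum, Finset.sum_div]
    refine Finset.sum_congr rfl fun q _ => ?_
    have hpow : (s:ℝ)^((2:ℝ)-(q:ℝ)) / (s:ℝ)^(1+2*H) = ((s:ℝ)^((q:ℝ)+2*H-1))⁻¹ := by
      rw [← Real.rpow_sub hs0,
        show (2:ℝ)-(q:ℝ)-(1+2*H) = -((q:ℝ)+2*H-1) from by ring,
        Real.rpow_neg hs0.le]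
    have : 2 * (d q * (s:ℝ)^((2:ℝ)-(q:ℝ)) * ∑ j ∈ Finset.Ico 1 s, γ j * (j:ℝ)^(q:ℝ))
          / (s:ℝ)^(1+2*H)
        = 2 * d q * ((∑ j ∈ Finset.Ico 1 s, γ j * (j:ℝ)^(q:ℝ))
          * ((s:ℝ)^((2:ℝ)-(q:ℝ)) / (s:ℝ)^(1+2*H))) := by
      ring
    rw [this, hpow, ← div_eq_mul_inv]
  rw [eM]
  -- now pure algebra
  have hsplitsum : (∑ j ∈ Finset.Ico 1 s, γ j * dfaG m s j)
      = (∑ j ∈ Finset.Ico 1 s,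
          γ j * (dfaG m s j - ∑ q ∈ Finset.range (2*m+4),
            d q * (s:ℝ)^((2:ℝ)-(q:ℝ)) * (j:ℝ)^(q:ℝ)))
        + ∑ j ∈ Finset.Ico 1 s, γ j * ∑ q ∈ Finset.range (2*m+4),
            d q * (s:ℝ)^((2:ℝ)-(q:ℝ)) * (j:ℝ)^(q:ℝ) := by
    rw [← Finset.sum_add_distrib]
    exact Finset.sum_congr rfl fun j _ => by ring
  rw [hsplitsum]
  have hD : (s:ℝ)^(1+2*H) = (s:ℝ) * (s:ℝ)^(2*H) := by
    rw [Real.rpow_add hs0, Real.rpow_one]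
  rw [hD]
  field_simp
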